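/- For a > 1/2, with α = (8a(2a-1))^{1/2} and β = (2(2a-1))^{1/2}, the Kuznetsov-Ma breather B_KM satisfies M[B_KM] = ∫_ℝ (|B_KM(t,x)|² - 1) dx = 4β for every t ∈ ℝ. -/

import Mathlib

open Complex

/-- Partial derivative in the first (time) variable. -/
noncomputable def pdt (u : ℝ → ℝ → ℂ) (t x : ℝ) : ℂ := deriv (fun s => u s x) t

/-- Partial derivative in the second (space) variable. -/
noncomputable def pdx (u : ℝ → ℝ → ℂ) (t x : ℝ) : ℂ := deriv (fun y => u t y) x

/-- `u` solves the cubic focusing NLS `i u_t + u_xx + |u|² u = 0`. -/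
def IsNLSSolution (u : ℝ → ℝ → ℂ) : Prop :=
  ∀ t x : ℝ, Complex.I * pdt u t x + pdx (pdx u) t x
    + ((‖u t x‖ : ℝ) : ℂ)^2 * u t x = 0

/-- Parameter `α` of the Kuznetsov-Ma breather. -/
noncomputable def KMalpha (a : ℝ) : ℝ := Real.sqrt (8 * a * (2 * a - 1))

/-- Parameter `β` of the Kuznetsov-Ma breather. -/
noncomputable def KMbeta (a : ℝ) : ℝ := Real.sqrt (2 * (2 * a - 1))

/-- The Kuznetsov-Ma breather with parameter `a > 1/2`. -/
noncomputable def BKM (a : ℝ) (t x : ℝ) : ℂ :=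
  Complex.exp (Complex.I * t) *
    (1 - Real.sqrt 2 * (KMbeta a) *
      (((KMbeta a : ℂ))^2 * Real.cos (KMalpha a * t)
        + Complex.I * (KMalpha a) * Real.sin (KMalpha a * t)) /
      ((KMalpha a : ℂ) * Real.cosh (KMbeta a * x)
        - (Real.sqrt 2 : ℂ) * (KMbeta a) * Real.cos (KMalpha a * t)))

open MeasureTheory Set Filter Topology


lemma cosh_ge_half_exp_abs (y : ℝ) : Real.exp |y| / 2 ≤ Real.cosh y := by
  rw [Real.cosh_eq]
  rcases abs_cases y with ⟨h, _⟩ | ⟨h, _⟩ <;> rw [h] <;>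
    nlinarith [Real.exp_pos y, Real.exp_pos (-y)]

lemma key_deriv (A B c : ℝ) (hB : 0 < B) (hc : |c| < A) (x : ℝ) :
    HasDerivAt (fun x => Real.sinh (B*x) / (A * Real.cosh (B*x) - c))
      (B * (A - c * Real.cosh (B*x)) / (A * Real.cosh (B*x) - c)^2) x := by
  have hA : 0 < A := (abs_nonneg c).trans_lt hc
  have hD : 0 < A * Real.cosh (B*x) - c := by
    nlinarith [Real.one_le_cosh (B*x), le_abs_self c]
  have hBx : HasDerivAt (fun x : ℝ => B * x) B x := by
    simpa using (hasDerivAt_id x).const_mul B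
  have hnum : HasDerivAt (fun x => Real.sinh (B*x)) (Real.cosh (B*x) * B) x := hBx.sinh
  have hden : HasDerivAt (fun x => A * Real.cosh (B*x) - c)
      (A * (Real.sinh (B*x) * B)) x := ((hBx.cosh).const_mul A).sub_const c
  have h := hnum.div hden hD.ne'
  refine h.congr_deriv (Eq.symm ?_)
  have hid := Real.cosh_sq_sub_sinh_sq (B*x)
  rw [div_eq_div_iff (by positivity) (by positivity)]
  linear_combination (-(B*A*(A * Real.cosh (B*x) - c)^2)) * hid

lemma key_integral (A B c : ℝ) (hB : 0 < B) (hc : |c| < A) :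
    ∫ x : ℝ, B * (A - c * Real.cosh (B*x)) / (A * Real.cosh (B*x) - c)^2 = 2 / A := by
  have hA : 0 < A := (abs_nonneg c).trans_lt hc
  have hD : ∀ x : ℝ, 0 < A * Real.cosh (B*x) - c := fun x => by
    nlinarith [Real.one_le_cosh (B*x), le_abs_self c]
  set g : ℝ → ℝ := fun x => Real.sinh (B*x) / (A * Real.cosh (B*x) - c) with hg_def
  set f' : ℝ → ℝ := fun x => B * (A - c * Real.cosh (B*x)) / (A * Real.cosh (B*x) - c)^2
    with hf'_def
  have hg : ∀ x, HasDerivAt g (f' x) x := key_deriv A B c hB hc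
  have hAc : 0 < A - |c| := by linarith
  -- continuity of f'
  have hcont : Continuous f' := by
    apply Continuous.div
    · fun_prop
    · fun_prop
    · exact fun x => pow_ne_zero 2 (hD x).ne'
  -- pointwise bound
  have hbound : ∀ x : ℝ, ‖f' x‖ ≤ (2*B*(A+|c|)/(A-|c|)^2) * Real.exp (-(B*|x|)) := by
    intro x
    have h1 : 1 ≤ Real.cosh (B*x) := Real.one_le_cosh _
    have hcoshpos : (0:ℝ) < Real.cosh (B*x) := by linarith
    have h2 : Real.exp (B*|x|) ≤ 2 * Real.cosh (B*x) := by
      have := cosh_ge_half_exp_abs (B*x)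
      rw [abs_mul, abs_of_pos hB] at this
      linarith
    have hDx := hD x
    have hexp : (0:ℝ) < Real.exp (-(B*|x|)) := Real.exp_pos _
    have hee : Real.exp (-(B*|x|)) * Real.exp (B*|x|) = 1 := by
      rw [← Real.exp_add]; simp
    have habs : ‖f' x‖ = B * |A - c * Real.cosh (B*x)| / (A * Real.cosh (B*x) - c)^2 := by
      rw [hf'_def]
      rw [Real.norm_eq_abs, abs_div, abs_mul, abs_of_pos hB, abs_of_pos (pow_pos hDx 2)]
    rw [habs, div_le_iff₀ (pow_pos hDx 2)]
    have hnum : |A - c * Real.cosh (B*x)| ≤ (A + |c|) * Real.cosh (B*x) := by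
      rw [abs_le]
      constructor <;> nlinarith [neg_abs_le c, le_abs_self c]
    have ht1 : ((A - |c|) * Real.cosh (B*x))^2 ≤ (A * Real.cosh (B*x) - c)^2 := by
      apply pow_le_pow_left₀ (by positivity)
      nlinarith [le_abs_self c, mul_nonneg (abs_nonneg c) (by linarith : (0:ℝ) ≤ Real.cosh (B*x) - 1)]
    have ht2 : Real.cosh (B*x) ≤ 2 * Real.exp (-(B*|x|)) * Real.cosh (B*x)^2 := by
      nlinarith [mul_le_mul_of_nonneg_left h2 (le_of_lt (mul_pos hexp hcoshpos))]
    rw [show 2*B*(A+|c|)/(A-|c|)^2 * Real.exp (-(B*|x|)) * (A * Real.cosh (B*x) - c)^2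
        = (2*B*(A+|c|)) * (Real.exp (-(B*|x|)) * (A * Real.cosh (B*x) - c)^2) / (A-|c|)^2
        by ring, le_div_iff₀ (by positivity)]
    calc B * |A - c * Real.cosh (B*x)| * (A-|c|)^2
        ≤ B * ((A + |c|) * Real.cosh (B*x)) * (A-|c|)^2 := by
          have : (0:ℝ) ≤ B * (A-|c|)^2 := by positivity
          nlinarith [mul_le_mul_of_nonneg_left hnum this]
      _ ≤ B * ((A + |c|) * (2 * Real.exp (-(B*|x|)) * Real.cosh (B*x)^2)) * (A-|c|)^2 := by
          have hcoef : (0:ℝ) ≤ B * (A + |c|) * (A-|c|)^2 := by positivity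
          nlinarith [mul_le_mul_of_nonneg_left ht2 hcoef]
      _ = (2*B*(A+|c|)) * (Real.exp (-(B*|x|)) * ((A - |c|) * Real.cosh (B*x))^2) := by ring
      _ ≤ (2*B*(A+|c|)) * (Real.exp (-(B*|x|)) * (A * Real.cosh (B*x) - c)^2) := by
          have hcoef : (0:ℝ) ≤ 2*B*(A+|c|) := by positivity
          have := mul_le_mul_of_nonneg_left ht1 hexp.le
          nlinarith [mul_le_mul_of_nonneg_left this hcoef]
  -- integrability
  have hInt_Ioi : IntegrableOn f' (Ioi (0:ℝ)) := by
    apply Integrable.mono' (g := fun x => (2*B*(A+|c|)/(A-|c|)^2) * Real.exp (-B*x))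
    · exact ((exp_neg_integrableOn_Ioi 0 hB)).const_mul _
    · exact hcont.aestronglyMeasurable.restrict
    · filter_upwards [ae_restrict_mem measurableSet_Ioi] with x hx
      have : |x| = x := abs_of_pos hx
      calc ‖f' x‖ ≤ (2*B*(A+|c|)/(A-|c|)^2) * Real.exp (-(B*|x|)) := hbound x
        _ = (2*B*(A+|c|)/(A-|c|)^2) * Real.exp (-B*x) := by rw [this, neg_mul]
  have heven : ∀ x, f' (-x) = f' x := by
    intro x
    simp only [hf'_def, mul_neg, Real.cosh_neg]
  have hInt_Iic : IntegrableOn f' (Iic (0:ℝ)) := by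
    have A1 : MeasurableEmbedding (fun x : ℝ => -x) :=
      (Homeomorph.neg ℝ).isClosedEmbedding.measurableEmbedding
    have h0 : IntegrableOn f' (Iic (0:ℝ)) (Measure.map (fun x : ℝ => -x) volume) := by
      rw [A1.integrableOn_map_iff]
      have hpre : (fun x : ℝ => -x) ⁻¹' (Iic (0:ℝ)) = Ici 0 := by
        ext y; simp
      rw [hpre]
      have : (f' ∘ fun x : ℝ => -x) = f' := funext fun x => heven x
      rw [this]
      exact Iff.mpr integrableOn_Ici_iff_integrableOn_Ioi hInt_Ioi
    rwa [Measure.map_neg_eq_self] at h0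
  have hInt : Integrable f' := by
    rw [← integrableOn_univ, ← Set.Iic_union_Ioi (a := (0:ℝ))]
    exact hInt_Iic.union hInt_Ioi
  -- limits
  have hT1 : Tendsto (fun x : ℝ => Real.exp (-(B*x))) atTop (𝓝 0) := by
    apply Real.tendsto_exp_neg_atTop_nhds_zero.comp
    exact (tendsto_id.const_mul_atTop hB)
  have hT2 : Tendsto (fun x : ℝ => Real.exp (-(2*B*x))) atTop (𝓝 0) := by
    apply Real.tendsto_exp_neg_atTop_nhds_zero.comp
    exact (tendsto_id.const_mul_atTop (by linarith : (0:ℝ) < 2*B))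
  have hgalt : ∀ x : ℝ, g x =
      (1 - Real.exp (-(2*B*x))) / (A * (1 + Real.exp (-(2*B*x))) - 2*c*Real.exp (-(B*x))) := by
    intro x
    set E := Real.exp (B*x) with hE_def
    have hE : (0:ℝ) < E := Real.exp_pos _
    have hDx := hD x
    have hE1 : Real.exp (-(B*x)) = E⁻¹ := Real.exp_neg _
    have hE2 : Real.exp (-(2*B*x)) = E⁻¹*E⁻¹ := by
      rw [show -(2*B*x) = -(B*x) + -(B*x) by ring, Real.exp_add, hE1]
    have hsinh : Real.sinh (B*x) = (E - E⁻¹)/2 := by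
      rw [Real.sinh_eq, Real.exp_neg]
    have hcosh : Real.cosh (B*x) = (E + E⁻¹)/2 := by
      rw [Real.cosh_eq, Real.exp_neg]
    rw [hcosh] at hDx
    have hden2 : A * (1 + E⁻¹*E⁻¹) - 2*c*E⁻¹ = 2*E⁻¹*(A*((E+E⁻¹)/2) - c) := by
      field_simp
    rw [hg_def]
    simp only
    rw [hsinh, hcosh, hE1, hE2, hden2]
    rw [div_eq_div_iff hDx.ne' (by positivity)]
    field_simp
  have htop : Tendsto g atTop (𝓝 (1/A)) := by
    have hlim : Tendsto (fun x : ℝ =>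
        (1 - Real.exp (-(2*B*x))) / (A * (1 + Real.exp (-(2*B*x))) - 2*c*Real.exp (-(B*x))))
        atTop (𝓝 ((1 - 0) / (A * (1 + 0) - 2*c*0))) := by
      apply Tendsto.div
      · exact (tendsto_const_nhds).sub hT2
      · exact ((tendsto_const_nhds).add hT2).const_mul A |>.sub (hT1.const_mul (2*c))
      · simp [hA.ne']
    simp only [sub_zero, mul_zero, add_zero, mul_one] at hlim
    exact Tendsto.congr (fun x => (hgalt x).symm) hlim
  have hodd : ∀ x, g (-x) = - g x := by
    intro x
    simp only [hg_def, mul_neg, Real.sinh_neg, Real.cosh_neg, neg_div]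
  have hbot : Tendsto g atBot (𝓝 (-(1/A))) := by
    have := (htop.comp tendsto_neg_atBot_atTop).neg
    refine this.congr fun x => ?_
    simp only [Function.comp]
    rw [hodd x, neg_neg]
  have := integral_of_hasDerivAt_of_tendsto hg hInt hbot htop
  rw [this]
  ring

theorem KM_mass (a : ℝ) (ha : 1/2 < a) (t : ℝ) :
    ∫ x : ℝ, ((‖BKM a t x‖)^2 - 1) = 4 * KMbeta a := by
  set α := KMalpha a with hα_def
  set β := KMbeta a with hβ_def
  set s2 := Real.sqrt 2 with hs2_def
  have hβ2 : β^2 = 2*(2*a-1) := Real.sq_sqrt (by linarith)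
  have hα2 : α^2 = 8*a*(2*a-1) := Real.sq_sqrt (by nlinarith)
  have hβpos : 0 < β := Real.sqrt_pos.mpr (by linarith)
  have hαpos : 0 < α := Real.sqrt_pos.mpr (by nlinarith)
  have hs2 : s2^2 = 2 := Real.sq_sqrt (by norm_num)
  have hs2pos : 0 < s2 := Real.sqrt_pos.mpr (by norm_num)
  have h4 : β^4 = α^2 - 2*β^2 := by
    rw [show β^4 = (β^2)^2 by ring, hβ2, hα2]; ring
  set ct := Real.cos (α * t) with hct_def
  set st := Real.sin (α * t) with hst_def
  have pyth : st^2 + ct^2 = 1 := Real.sin_sq_add_cos_sq _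
  set c := s2 * β * ct with hc_def
  have hsb : s2 * β < α := by
    have h1 : (s2*β)^2 < α^2 := by
      rw [mul_pow, hs2]
      nlinarith [pow_pos hβpos 4]
    exact lt_of_pow_lt_pow_left₀ 2 hαpos.le h1
  have hc : |c| < α := by
    have : |c| ≤ s2 * β := by
      rw [hc_def, abs_mul, abs_of_pos (mul_pos hs2pos hβpos)]
      nlinarith [Real.abs_cos_le_one (α*t), abs_nonneg (Real.cos (α*t)),
        mul_pos hs2pos hβpos]
    linarith
  have hpt : ∀ x : ℝ, (‖BKM a t x‖)^2 - 1
      = (2*α*β) * (β*(α - c*Real.cosh (β*x))/(α*Real.cosh (β*x) - c)^2) := by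
    intro x
    set ch := Real.cosh (β*x) with hch_def
    have hch1 : 1 ≤ ch := Real.one_le_cosh _
    have hDpos : 0 < α*ch - c := by
      nlinarith [le_abs_self c]
    have hD0 : ((α*ch - c : ℝ) : ℂ) ≠ 0 := by
      exact_mod_cast hDpos.ne'
    have hBKM : BKM a t x = Complex.exp (Complex.I * t) *
        ((((α*ch - c - β^2*c : ℝ) : ℂ) + ((-(s2*β*α*st) : ℝ) : ℂ)*Complex.I)
          /((α*ch - c : ℝ) : ℂ)) := by
      have hD0' : ((α:ℂ)*(ch:ℂ) - (s2:ℂ)*(β:ℂ)*(ct:ℂ)) ≠ 0 := by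
        have heq : ((α:ℂ)*(ch:ℂ) - (s2:ℂ)*(β:ℂ)*(ct:ℂ)) = ((α*ch - c : ℝ):ℂ) := by
          rw [hc_def]; push_cast; ring
        rw [heq]; exact hD0
      rw [BKM]
      congr 1
      rw [← hα_def, ← hβ_def, ← hs2_def, ← hct_def, ← hst_def, ← hch_def, hc_def]
      push_cast
      field_simp
      ring
    have habs : (‖BKM a t x‖)^2
        = ((α*ch - c - β^2*c)^2 + (s2*β*α*st)^2)/(α*ch - c)^2 := by
      rw [hBKM, norm_mul, norm_div, Complex.norm_exp]
      have hre : (Complex.I * (t:ℂ)).re = 0 := by simp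
      rw [hre, Real.exp_zero, one_mul, div_pow, Complex.sq_norm, Complex.sq_norm,
        Complex.normSq_add_mul_I, Complex.normSq_ofReal]
      rw [show (α*ch - c) * (α*ch - c) = (α*ch - c)^2 by ring]
      ring_nf
    have hnum : (α*ch - c - β^2*c)^2 + (s2*β*α*st)^2 - (α*ch - c)^2
        = 2*α*β*(β*(α - c*ch)) := by
      rw [hc_def]
      linear_combination (s2^2*β^2*ct^2) * h4 + (s2^2*β^2*α^2) * pyth + (β^2*α^2) * hs2
    have hsplit : ((α*ch - c - β^2*c)^2 + (s2*β*α*st)^2)/(α*ch-c)^2 - 1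
        = ((α*ch - c - β^2*c)^2 + (s2*β*α*st)^2 - (α*ch-c)^2)/(α*ch-c)^2 := by
      field_simp
    rw [habs, hsplit, hnum]
    ring
  calc ∫ x : ℝ, ((‖BKM a t x‖)^2 - 1)
      = ∫ x : ℝ, (2*α*β) * (β*(α - c*Real.cosh (β*x))/(α*Real.cosh (β*x) - c)^2) :=
        integral_congr_ae (Filter.Eventually.of_forall fun x => hpt x)
    _ = (2*α*β) * ∫ x : ℝ, β*(α - c*Real.cosh (β*x))/(α*Real.cosh (β*x) - c)^2 :=
        integral_const_mul _ _
    _ = (2*α*β) * (2/α) := by rw [key_integral α β c hβpos hc]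
    _ = 4 * β := by field_simp; ring
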